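/- Let I, J ⊆ V be disjoint of sizes i and j. Then p_{I,J} is the constant function 1 on binom(V,k) if and only if one of the following holds: (1) i + j = 1; (2) n = 2 and k = i = j = 1; (3) k ∈ {0, n}, min(i,j) = 0, and max(i,j) ≠ 0. -/
import Mathlib


open Finset

private lemma ite_sum_one_iff {P Q : Prop} [Decidable P] [Decidable Q] :
    ((if P then (1 : ℝ) else 0) + (if Q then (1 : ℝ) else 0) = 1) ↔
      ((P ∧ ¬Q) ∨ (¬P ∧ Q)) := by
  by_cases hP : P <;> by_cases hQ : Q <;> simp [hP, hQ]

private lemma one_empty_aux {α : Type*} [Fintype α] [DecidableEq α] {k : ℕ}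
    (hk1 : 1 ≤ k) (hkn : k < Fintype.card α) {I : Finset α}
    (H : ∀ K : Finset α, K.card = k →
      ((I ⊆ K ∧ ¬ Disjoint K I) ∨ (¬ I ⊆ K ∧ Disjoint K I))) :
    I.card = 1 := by
  have hIne : I ≠ ∅ := by
    intro h0
    obtain ⟨K, -, hKc⟩ := exists_subset_card_eq (s := (univ : Finset α))
      (n := k) (by rw [card_univ]; exact hkn.le)
    have := H K hKc
    simp [h0] at this
  have hle : I.card ≤ 1 := by
    by_contra hgt
    push_neg at hgt
    obtain ⟨a, ha, b, hb, hab⟩ := one_lt_card.mp hgt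
    have hsub : ({a} : Finset α) ⊆ univ \ {b} := by
      simp [subset_sdiff, eq_comm, hab]
    obtain ⟨K, haK, hKsub, hKc⟩ := exists_subsuperset_card_eq hsub
      (by simpa using hk1)
      (by rw [card_sdiff_of_subset (by simp)]; simp; omega)
    have haK' : a ∈ K := haK (by simp)
    have hbK : b ∉ K := by
      intro hbK
      have := hKsub hbK
      simp at this
    rcases H K hKc with ⟨h1, -⟩ | ⟨-, h2⟩
    · exact hbK (h1 hb)
    · exact (disjoint_left.mp h2 haK') ha
  have : 0 < I.card := card_pos.mpr (nonempty_of_ne_empty hIne)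
  omega

/-- `p_{I,J} = 1` iff (1) `i + j = 1`, or (2) `n = 2` and `k = i = j = 1`, or
(3) `k ∈ {0,n}`, `min(i,j) = 0` and `max(i,j) ≠ 0`. -/
theorem paired_eq_one_iff {α : Type*} [Fintype α] [DecidableEq α] (n k i j : ℕ)
    (hn : Fintype.card α = n) (hk : k ≤ n)
    (I J : Finset α) (hd : Disjoint I J) (hi : I.card = i) (hj : J.card = j) :
    (∀ K ∈ Finset.powersetCard k (Finset.univ : Finset α),
      ((if I ⊆ K ∧ K ⊆ Finset.univ \ J then (1 : ℝ) else 0) +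
        (if J ⊆ K ∧ K ⊆ Finset.univ \ I then (1 : ℝ) else 0)) = 1) ↔
      ((i + j = 1) ∨
       (n = 2 ∧ k = 1 ∧ i = 1 ∧ j = 1) ∨
       ((k = 0 ∨ k = n) ∧ min i j = 0 ∧ max i j ≠ 0)) := by
  have hi0 : i = 0 ↔ I = ∅ := by rw [← hi, card_eq_zero]
  have hj0 : j = 0 ↔ J = ∅ := by rw [← hj, card_eq_zero]
  have hiff : (∀ K ∈ Finset.powersetCard k (Finset.univ : Finset α),
      ((if I ⊆ K ∧ K ⊆ Finset.univ \ J then (1 : ℝ) else 0) +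
        (if J ⊆ K ∧ K ⊆ Finset.univ \ I then (1 : ℝ) else 0)) = 1) ↔
      (∀ K : Finset α, K.card = k →
        (((I ⊆ K ∧ Disjoint K J) ∧ ¬(J ⊆ K ∧ Disjoint K I)) ∨
         (¬(I ⊆ K ∧ Disjoint K J) ∧ (J ⊆ K ∧ Disjoint K I)))) := by
    constructor
    · intro H K hK
      have := H K (mem_powersetCard_univ.mpr hK)
      rw [ite_sum_one_iff] at this
      simpa [subset_sdiff] using this
    · intro H K hK
      rw [ite_sum_one_iff]
      have := H K (mem_powersetCard_univ.mp hK)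
      simpa [subset_sdiff] using this
  rw [hiff]
  constructor
  · intro H
    by_cases hk0 : k = 0
    · subst hk0
      have h0 := H ∅ card_empty
      simp [subset_empty] at h0
      have hnum : (i = 0 ∧ j ≠ 0) ∨ (i ≠ 0 ∧ j = 0) := by
        rw [hi0, hj0]; tauto
      right; right
      exact ⟨Or.inl rfl, by omega, by omega⟩
    by_cases hkn : k = n
    · have h0 := H univ (by rw [card_univ, hn, hkn])
      have hdu : ∀ s : Finset α, Disjoint (univ : Finset α) s ↔ s = ∅ := by
        intro s
        constructor
        · intro h
          exact eq_empty_of_forall_notMem fun x hx => (disjoint_left.mp h (mem_univ x)) hx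
        · rintro rfl
          exact disjoint_empty_right _
      simp [hdu] at h0
      have hnum : (i = 0 ∧ j ≠ 0) ∨ (i ≠ 0 ∧ j = 0) := by
        rw [hi0, hj0]; tauto
      right; right
      exact ⟨Or.inr hkn, by omega, by omega⟩
    have hk1 : 1 ≤ k := Nat.one_le_iff_ne_zero.mpr hk0
    have hkn' : k < n := lt_of_le_of_ne hk hkn
    by_cases hI0 : I = ∅
    · -- then J ≠ ∅ and j = 1
      have hJ1 : J.card = 1 := by
        apply one_empty_aux hk1 (by omega)
        intro K hK
        have := H K hK
        simp [hI0] at this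
        tauto
      have : j = 1 := by rw [← hj, hJ1]
      have : i = 0 := hi0.mpr hI0
      left; omega
    by_cases hJ0 : J = ∅
    · have hI1 : I.card = 1 := by
        apply one_empty_aux hk1 (by omega)
        intro K hK
        have := H K hK
        simp [hJ0] at this
        tauto
      have : i = 1 := by rw [← hi, hI1]
      have : j = 0 := hj0.mpr hJ0
      left; omega
    -- both nonempty
    obtain ⟨a, ha⟩ := nonempty_of_ne_empty hI0
    obtain ⟨b, hb⟩ := nonempty_of_ne_empty hJ0
    have hab : a ≠ b := by
      intro h
      exact (disjoint_left.mp hd ha) (h ▸ hb)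
    by_cases hk2 : 2 ≤ k
    · exfalso
      have hcard2 : ({a, b} : Finset α).card = 2 := by
        rw [card_insert_of_notMem (by simp [hab]), card_singleton]
      obtain ⟨K, habK, -, hKc⟩ := exists_subsuperset_card_eq
        (subset_univ ({a, b} : Finset α))
        (hcard2 ▸ hk2 : ({a, b} : Finset α).card ≤ k)
        (by rw [card_univ, hn]; exact hk)
      have haK : a ∈ K := habK (by simp)
      have hbK : b ∈ K := habK (by simp)
      rcases H K hKc with ⟨⟨-, h1⟩, -⟩ | ⟨-, -, h2⟩
      · exact (disjoint_left.mp h1 hbK) hb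
      · exact (disjoint_left.mp h2 haK) ha
    have hk1' : k = 1 := by omega
    subst hk1'
    -- K = {a} : B fails, so I ⊆ {a}, I = {a}
    have hIa : I = {a} := by
      have := H {a} (card_singleton a)
      rcases this with ⟨⟨h1, -⟩, -⟩ | ⟨-, -, h2⟩
      · rcases subset_singleton_iff.mp h1 with h | h
        · exact absurd h hI0
        · exact h
      · exact absurd (disjoint_singleton_left.mp h2) (by simpa using ha)
    have hJb : J = {b} := by
      have := H {b} (card_singleton b)
      rcases this with ⟨⟨-, h1⟩, -⟩ | ⟨-, h2, -⟩
      · exact absurd hb (disjoint_singleton_left.mp h1)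
      · rcases subset_singleton_iff.mp h2 with h | h
        · exact absurd h hJ0
        · exact h
    have hicard : i = 1 := by rw [← hi, hIa, card_singleton]
    have hjcard : j = 1 := by rw [← hj, hJb, card_singleton]
    -- show n = 2
    have hn2 : n ≤ 2 := by
      by_contra hgt
      push_neg at hgt
      have hcompl : ((I ∪ J)ᶜ : Finset α).Nonempty := by
        rw [← card_pos, card_compl, card_union_of_disjoint hd, hi, hj, hn]
        omega
      obtain ⟨c, hc⟩ := hcompl
      simp only [mem_compl, mem_union] at hc
      push_neg at hc
      have := H {c} (card_singleton c)
      rcases this with ⟨⟨h1, -⟩, -⟩ | ⟨-, h2, -⟩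
      · rw [hIa] at h1
        have hac : a = c := mem_singleton.mp (h1 (mem_singleton_self a))
        exact hc.1 (hac ▸ ha)
      · rw [hJb] at h2
        have hbc : b = c := mem_singleton.mp (h2 (mem_singleton_self b))
        exact hc.2 (hbc ▸ hb)
    right; left
    exact ⟨by omega, rfl, hicard, hjcard⟩
  · intro hcase K hK
    rcases hcase with h1 | ⟨hn2, hk1, hi1, hj1⟩ | ⟨hk0n, hmin, hmax⟩
    · -- i + j = 1
      rcases (by omega : (i = 1 ∧ j = 0) ∨ (i = 0 ∧ j = 1)) with ⟨hi1, hj1⟩ | ⟨hi1, hj1⟩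
      · have hJ : J = ∅ := hj0.mp hj1
        obtain ⟨a, hIa⟩ := card_eq_one.mp (by rw [hi, hi1])
        by_cases haK : a ∈ K <;>
          simp [hIa, hJ, singleton_subset_iff, disjoint_singleton_right, haK]
      · have hI : I = ∅ := hi0.mp hi1
        obtain ⟨b, hJb⟩ := card_eq_one.mp (by rw [hj, hj1])
        by_cases hbK : b ∈ K <;>
          simp [hJb, hI, singleton_subset_iff, disjoint_singleton_right, hbK]
    · -- n = 2, k = 1, i = 1, j = 1
      obtain ⟨a, hIa⟩ := card_eq_one.mp (by rw [hi, hi1])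
      obtain ⟨b, hJb⟩ := card_eq_one.mp (by rw [hj, hj1])
      have hab : a ≠ b := by
        intro h
        have haI : a ∈ I := by simp [hIa]
        have haJ : a ∈ J := by simp [hJb, h]
        exact (disjoint_left.mp hd haI) haJ
      obtain ⟨x, hKx⟩ := card_eq_one.mp (by rw [hK, hk1])
      have huniv : (univ : Finset α) = I ∪ J := by
        apply (eq_univ_of_card (I ∪ J) ?_).symm
        rw [card_union_of_disjoint hd, hi, hj, hi1, hj1, hn, hn2]
      have hx : x = a ∨ x = b := by
        have := mem_univ x
        rw [huniv, mem_union, hIa, hJb] at this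
        simpa using this
      rcases hx with rfl | rfl <;>
        simp [hKx, hIa, hJb, disjoint_singleton_left, hab, hab.symm, singleton_subset_iff]
    · -- k = 0 or k = n
      have hsplit : (I = ∅ ∧ J ≠ ∅) ∨ (I ≠ ∅ ∧ J = ∅) := by
        have h1 : I = ∅ ∨ J = ∅ := by rw [← hi0, ← hj0]; omega
        have h2 : ¬(I = ∅ ∧ J = ∅) := by rw [← hi0, ← hj0]; omega
        tauto
      rcases hk0n with rfl | rfl
      · have hKe : K = ∅ := card_eq_zero.mp hK
        subst hKe
        rcases hsplit with ⟨h1, h2⟩ | ⟨h1, h2⟩ <;>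
          simp [subset_empty, h1, h2]
      · have hKu : K = univ := eq_univ_of_card K (by rw [hK, hn])
        subst hKu
        have hdu : ∀ s : Finset α, Disjoint (univ : Finset α) s ↔ s = ∅ := by
          intro s
          constructor
          · intro h
            exact eq_empty_of_forall_notMem fun x hx => (disjoint_left.mp h (mem_univ x)) hx
          · rintro rfl
            exact disjoint_empty_right _
        rcases hsplit with ⟨h1, h2⟩ | ⟨h1, h2⟩ <;>
          simp [subset_univ, hdu, h1, h2]
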